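/- Let A : [0,1]² → ℝ be C² with ∂²A/∂x∂y > 0 everywhere, m = max_{ν∈M} ∫A dν, and let ν be a maximizing measure in M. Then ν is supported on a graph: for each x ∈ [0,1] there is at most one y with (x,y) ∈ supp(ν). -/

import Mathlib

open MeasureTheory unitInterval

/-- topological support of a measure -/
def measSupp {X : Type*} [TopologicalSpace X] [MeasurableSpace X]
    (ν : Measure X) : Set X := {p | ∀ U : Set X, IsOpen U → p ∈ U → 0 < ν U}

open scoped ENNReal
set_option maxHeartbeats 2000000

lemma contInt {X : Type*} [MeasurableSpace X] [TopologicalSpace X] [OpensMeasurableSpace X]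
    [CompactSpace X] [MetricSpace X] {h : X → ℝ} (hh : Continuous h) (μ : Measure X)
    [IsFiniteMeasure μ] : Integrable h μ :=
  (BoundedContinuousFunction.mkOfCompact ⟨h, hh⟩).integrable μ

lemma nullOfLocalNull {X : Type*} [TopologicalSpace X] [MeasurableSpace X]
    [SecondCountableTopology X] (ν : Measure X) {G : Set X}
    (h : ∀ p ∈ G, ∃ U, IsOpen U ∧ p ∈ U ∧ ν U = 0) : ν G = 0 := by
  choose U hUo hUm hU0 using h
  obtain ⟨T, hTc, hTs, hTu⟩ := TopologicalSpace.isOpen_sUnion_countable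
    {s | ∃ p, ∃ hp : p ∈ G, s = U p hp} (by rintro s ⟨p, hp, rfl⟩; exact hUo p hp)
  have hsub : G ⊆ ⋃₀ T := by
    rw [hTu]; intro p hp
    exact ⟨U p hp, ⟨p, hp, rfl⟩, hUm p hp⟩
  refine measure_mono_null hsub (measure_sUnion_null_iff hTc |>.2 ?_)
  intro s hs
  obtain ⟨p, hp, rfl⟩ := hTs hs
  exact hU0 p hp

lemma suppNull {X : Type*} [TopologicalSpace X] [MeasurableSpace X]
    [SecondCountableTopology X] (ν : Measure X) {G : Set X} (hG : IsOpen G)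
    (h : ∀ p ∈ G, p ∉ measSupp ν) : ν G = 0 := by
  refine nullOfLocalNull ν (fun p hp => ?_)
  have := h p hp
  simp only [measSupp, Set.mem_setOf_eq, not_forall] at this
  obtain ⟨U, hUo, hpU, hU⟩ := this
  exact ⟨U ∩ G, hUo.inter hG, ⟨hpU, hp⟩, by
    have : ν (U ∩ G) ≤ ν U := measure_mono Set.inter_subset_left
    have h0 : ν U = 0 := by simpa using hU
    simp [le_antisymm (h0 ▸ this) (zero_le)]⟩

lemma marginalsEq (μ : Measure (I × I)) [IsProbabilityMeasure μ]
    (hν : ∀ f : C(I, ℝ), ∫ p, (f p.1 - f p.2) ∂μ = 0) :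
    μ.map Prod.fst = μ.map Prod.snd := by
  haveI h1 : IsProbabilityMeasure (μ.map Prod.fst) :=
    Measure.isProbabilityMeasure_map measurable_fst.aemeasurable
  haveI h2 : IsProbabilityMeasure (μ.map Prod.snd) :=
    Measure.isProbabilityMeasure_map measurable_snd.aemeasurable
  apply ext_of_forall_lintegral_eq_of_IsFiniteMeasure
  intro f
  have hfc : Continuous fun x : I => (f x : ℝ) := NNReal.continuous_coe.comp f.continuous
  have hint : ∫ x, (f x : ℝ) ∂(μ.map Prod.fst) = ∫ x, (f x : ℝ) ∂(μ.map Prod.snd) := by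
    rw [integral_map measurable_fst.aemeasurable hfc.aestronglyMeasurable,
        integral_map measurable_snd.aemeasurable hfc.aestronglyMeasurable]
    have := hν ⟨fun x => (f x : ℝ), hfc⟩
    simp only [ContinuousMap.coe_mk] at this
    have hsub := integral_sub (contInt (hfc.comp continuous_fst) μ)
      (contInt (hfc.comp continuous_snd) μ)
    simp only [Function.comp] at hsub
    rw [hsub] at this
    linarith
  have e1 := BoundedContinuousFunction.toReal_lintegral_coe_eq_integral f (μ.map Prod.fst)
  have e2 := BoundedContinuousFunction.toReal_lintegral_coe_eq_integral f (μ.map Prod.snd)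
  have fin1 := BoundedContinuousFunction.lintegral_lt_top_of_nnreal (μ.map Prod.fst) f
  have fin2 := BoundedContinuousFunction.lintegral_lt_top_of_nnreal (μ.map Prod.snd) f
  rw [← e1, ← e2] at hint
  exact (ENNReal.toReal_eq_toReal_iff' fin1.ne fin2.ne).1 hint

lemma twistRect (A : ℝ → ℝ → ℝ) (hA : ContDiff ℝ 2 (Function.uncurry A))
    (htwist : ∀ x ∈ Set.Icc (0:ℝ) 1, ∀ y ∈ Set.Icc (0:ℝ) 1,
      0 < deriv (fun y' => deriv (fun x' => A x' y') x) y)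
    {x₁ x₂ y₁ y₂ : ℝ} (hx₁ : x₁ ∈ Set.Icc (0:ℝ) 1) (hx₂ : x₂ ∈ Set.Icc (0:ℝ) 1)
    (hy₁ : y₁ ∈ Set.Icc (0:ℝ) 1) (hy₂ : y₂ ∈ Set.Icc (0:ℝ) 1)
    (hx : x₁ < x₂) (hy : y₂ < y₁) :
    A x₁ y₁ + A x₂ y₂ < A x₁ y₂ + A x₂ y₁ := by
  have hAd : Differentiable ℝ (Function.uncurry A) := hA.differentiable (by norm_num)
  -- F p = ∂₁A at p
  set F : ℝ × ℝ → ℝ := fun p => fderiv ℝ (Function.uncurry A) p (1, 0) with hF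
  have hFc : ContDiff ℝ 1 F := by
    have : ContDiff ℝ 1 (fun p => fderiv ℝ (Function.uncurry A) p) := by
      apply hA.fderiv_right
      norm_num
    exact this.clm_apply contDiff_const
  -- partial derivative in x
  have hPart : ∀ y x : ℝ, HasDerivAt (fun x' => A x' y) (F (x, y)) x := by
    intro y x
    have hcurve : HasDerivAt (fun x' : ℝ => (x', y)) ((1:ℝ), (0:ℝ)) x :=
      (hasDerivAt_id x).prodMk (hasDerivAt_const x y)
    have := ((hAd (x, y)).hasFDerivAt).comp_hasDerivAt x hcurve
    simpa [Function.comp_def] using this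
  have hPeq : ∀ y x : ℝ, deriv (fun x' => A x' y) x = F (x, y) :=
    fun y x => (hPart y x).deriv
  -- g x = fun y => ∂₁A(x,y) is strictly monotone on [0,1]
  have hg : ∀ x ∈ Set.Icc (0:ℝ) 1, StrictMonoOn (fun y => F (x, y)) (Set.Icc (0:ℝ) 1) := by
    intro x hxI
    have hgd : Differentiable ℝ (fun y => F (x, y)) :=
      (hFc.differentiable (by norm_num)).comp ((differentiable_const x).prodMk differentiable_id)
    apply strictMonoOn_of_deriv_pos (convex_Icc 0 1) hgd.continuous.continuousOn
    intro y hyI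
    rw [interior_Icc] at hyI
    have := htwist x hxI y (Set.mem_Icc.2 ⟨le_of_lt hyI.1, le_of_lt hyI.2⟩)
    have heq : (fun y' => deriv (fun x' => A x' y') x) = fun y' => F (x, y') := by
      funext y'; exact hPeq y' x
    rwa [heq] at this
  -- φ w = A w y₁ - A w y₂ strictly monotone on [x₁, x₂]
  have hφmono : StrictMonoOn (fun w => A w y₁ - A w y₂) (Set.Icc (0:ℝ) 1) := by
    apply strictMonoOn_of_deriv_pos (convex_Icc 0 1)
    · apply Continuous.continuousOn
      have c1 : Continuous fun w => A w y₁ := by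
        have := hA.continuous.comp (continuous_id.prodMk (continuous_const (y := y₁)))
        simpa [Function.uncurry, Function.comp_def] using this
      have c2 : Continuous fun w => A w y₂ := by
        have := hA.continuous.comp (continuous_id.prodMk (continuous_const (y := y₂)))
        simpa [Function.uncurry, Function.comp_def] using this
      exact c1.sub c2
    · intro w hwI
      rw [interior_Icc] at hwI
      have hwI' : w ∈ Set.Icc (0:ℝ) 1 := ⟨le_of_lt hwI.1, le_of_lt hwI.2⟩
      have hd : HasDerivAt (fun w => A w y₁ - A w y₂) (F (w, y₁) - F (w, y₂)) w :=
        (hPart y₁ w).sub (hPart y₂ w)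
      rw [hd.deriv]
      have := hg w hwI' hy₂ hy₁ hy
      linarith
  have := hφmono (Set.mem_Icc.2 hx₁) (Set.mem_Icc.2 hx₂) hx
  simp only at this
  linarith

/-- the continuous function p ↦ A p.1 p.2 on I × I -/
noncomputable def Abar (A : ℝ → ℝ → ℝ) : I × I → ℝ := fun r => A r.1 r.2

lemma AbarCont (A : ℝ → ℝ → ℝ) (hA : ContDiff ℝ 2 (Function.uncurry A)) :
    Continuous (Abar A) := by
  have : Abar A = (Function.uncurry A) ∘ (fun r : I × I => ((r.1 : ℝ), (r.2 : ℝ))) := rfl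
  rw [this]
  exact hA.continuous.comp ((continuous_subtype_val.comp continuous_fst).prodMk
    (continuous_subtype_val.comp continuous_snd))

/-- monotonicity of the support of a maximizing measure -/
lemma monoSupp (A : ℝ → ℝ → ℝ) (hA : ContDiff ℝ 2 (Function.uncurry A))
    (htwist : ∀ x ∈ Set.Icc (0:ℝ) 1, ∀ y ∈ Set.Icc (0:ℝ) 1,
      0 < deriv (fun y' => deriv (fun x' => A x' y') x) y)
    (m : ℝ) (ν : ProbabilityMeasure (I × I))
    (hν : ∀ f : C(I, ℝ), ∫ p, (f p.1 - f p.2) ∂(ν : Measure (I × I)) = 0)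
    (hmax : ∀ ν' : ProbabilityMeasure (I × I),
      (∀ f : C(I, ℝ), ∫ p, (f p.1 - f p.2) ∂(ν' : Measure (I × I)) = 0) →
      ∫ p, A p.1 p.2 ∂(ν' : Measure (I × I)) ≤ m)
    (hm : ∫ p, A p.1 p.2 ∂(ν : Measure (I × I)) = m)
    (p q : I × I) (hp : p ∈ measSupp (ν : Measure (I × I)))
    (hq : q ∈ measSupp (ν : Measure (I × I)))
    (h1 : (p.1 : ℝ) < (q.1 : ℝ)) (h2 : (q.2 : ℝ) < (p.2 : ℝ)) : False := by
  set μ : Measure (I × I) := (ν : Measure (I × I)) with hμdef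
  obtain ⟨x₁, y₁⟩ := p
  obtain ⟨x₂, y₂⟩ := q
  simp only at h1 h2 hp hq
  -- the twist gap
  set δ : ℝ := A x₁ y₂ + A x₂ y₁ - A x₁ y₁ - A x₂ y₂ with hδdef
  have hδ : 0 < δ := by
    have := twistRect A hA htwist x₁.2 x₂.2 y₁.2 y₂.2 h1 h2
    simp only [hδdef]; linarith
  set η : ℝ := δ / 5 with hηdef
  have hη : 0 < η := by positivity
  -- find a box size ρ
  have hcont := AbarCont A hA
  have key : ∀ z w : I, ∃ ρ > 0, ∀ a b : I, |(a:ℝ) - z| < ρ → |(b:ℝ) - w| < ρ →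
      |A a b - A z w| < η := by
    intro z w
    have hca : ContinuousAt (Abar A) (z, w) := hcont.continuousAt
    rw [Metric.continuousAt_iff] at hca
    obtain ⟨ρ, hρ, hball⟩ := hca η hη
    refine ⟨ρ, hρ, fun a b ha hb => ?_⟩
    have : dist ((a, b) : I × I) (z, w) < ρ := by
      rw [Prod.dist_eq]
      simp only [Subtype.dist_eq, Real.dist_eq]
      exact max_lt ha hb
    have := hball this
    rwa [Real.dist_eq] at this
  obtain ⟨ρ₁, hρ₁, hb₁⟩ := key x₁ y₁
  obtain ⟨ρ₂, hρ₂, hb₂⟩ := key x₂ y₂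
  obtain ⟨ρ₃, hρ₃, hb₃⟩ := key x₁ y₂
  obtain ⟨ρ₄, hρ₄, hb₄⟩ := key x₂ y₁
  set ρ : ℝ := min (min ρ₁ ρ₂) (min (min ρ₃ ρ₄) ((x₂ - x₁) / 2)) with hρdef
  have hρ : 0 < ρ := by
    simp only [hρdef, lt_min_iff]
    refine ⟨⟨hρ₁, hρ₂⟩, ⟨hρ₃, hρ₄⟩, by linarith⟩
  have hρρ₁ : ρ ≤ ρ₁ := le_trans (min_le_left _ _) (min_le_left _ _)
  have hρρ₂ : ρ ≤ ρ₂ := le_trans (min_le_left _ _) (min_le_right _ _)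
  have hρρ₃ : ρ ≤ ρ₃ := le_trans (min_le_right _ _) (le_trans (min_le_left _ _) (min_le_left _ _))
  have hρρ₄ : ρ ≤ ρ₄ := le_trans (min_le_right _ _) (le_trans (min_le_left _ _) (min_le_right _ _))
  have hρx : ρ ≤ (x₂ - x₁) / 2 := le_trans (min_le_right _ _) (min_le_right _ _)
  -- the boxes
  set U₁ : Set I := (fun w : I => (w : ℝ)) ⁻¹' Metric.ball (x₁ : ℝ) ρ with hU₁def
  set U₂ : Set I := (fun w : I => (w : ℝ)) ⁻¹' Metric.ball (x₂ : ℝ) ρ with hU₂def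
  set V₁ : Set I := (fun w : I => (w : ℝ)) ⁻¹' Metric.ball (y₁ : ℝ) ρ with hV₁def
  set V₂ : Set I := (fun w : I => (w : ℝ)) ⁻¹' Metric.ball (y₂ : ℝ) ρ with hV₂def
  have hU₁o : IsOpen U₁ := Metric.isOpen_ball.preimage continuous_subtype_val
  have hU₂o : IsOpen U₂ := Metric.isOpen_ball.preimage continuous_subtype_val
  have hV₁o : IsOpen V₁ := Metric.isOpen_ball.preimage continuous_subtype_val
  have hV₂o : IsOpen V₂ := Metric.isOpen_ball.preimage continuous_subtype_val
  have memU₁ : ∀ {a : I}, a ∈ U₁ ↔ |(a:ℝ) - x₁| < ρ := by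
    intro a; simp [hU₁def, Metric.mem_ball, Real.dist_eq, Subtype.dist_eq]
  have memU₂ : ∀ {a : I}, a ∈ U₂ ↔ |(a:ℝ) - x₂| < ρ := by
    intro a; simp [hU₂def, Metric.mem_ball, Real.dist_eq, Subtype.dist_eq]
  have memV₁ : ∀ {a : I}, a ∈ V₁ ↔ |(a:ℝ) - y₁| < ρ := by
    intro a; simp [hV₁def, Metric.mem_ball, Real.dist_eq, Subtype.dist_eq]
  have memV₂ : ∀ {a : I}, a ∈ V₂ ↔ |(a:ℝ) - y₂| < ρ := by
    intro a; simp [hV₂def, Metric.mem_ball, Real.dist_eq, Subtype.dist_eq]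
  set R₁ : Set (I × I) := U₁ ×ˢ V₁ with hR₁def
  set R₂ : Set (I × I) := U₂ ×ˢ V₂ with hR₂def
  have hR₁o : IsOpen R₁ := hU₁o.prod hV₁o
  have hR₂o : IsOpen R₂ := hU₂o.prod hV₂o
  have hR₁m : MeasurableSet R₁ := hR₁o.measurableSet
  have hR₂m : MeasurableSet R₂ := hR₂o.measurableSet
  have hdisj : Disjoint R₁ R₂ := by
    rw [Set.disjoint_left]
    rintro ⟨a, b⟩ ⟨ha1, -⟩ ⟨ha2, -⟩
    have h1' := memU₁.1 ha1
    have h2' := memU₂.1 ha2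
    rw [abs_lt] at h1' h2'
    linarith [hρx]
  -- positive masses
  have hm₁ : 0 < μ R₁ := hp R₁ hR₁o ⟨memU₁.2 (by simpa using hρ), memV₁.2 (by simpa using hρ)⟩
  have hm₂ : 0 < μ R₂ := hq R₂ hR₂o ⟨memU₂.2 (by simpa using hρ), memV₂.2 (by simpa using hρ)⟩
  haveI hPμ : IsProbabilityMeasure μ := by rw [hμdef]; infer_instance
  set M₁ := μ R₁ with hM₁def
  set M₂ := μ R₂ with hM₂def
  have hM₁0 : M₁ ≠ 0 := hm₁.ne'
  have hM₂0 : M₂ ≠ 0 := hm₂.ne'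
  have hM₁top : M₁ ≠ ∞ := measure_ne_top μ R₁
  have hM₂top : M₂ ≠ ∞ := measure_ne_top μ R₂
  set c : ℝ≥0∞ := min M₁ M₂ with hcdef
  have hc0 : c ≠ 0 := (lt_min hm₁ hm₂).ne'
  have hctop : c ≠ ∞ := ((min_le_left _ _).trans_lt hM₁top.lt_top).ne
  have hdiv₁ : c / M₁ ≤ 1 := by
    calc c / M₁ ≤ M₁ / M₁ := ENNReal.div_le_div_right (min_le_left _ _) _
    _ = 1 := ENNReal.div_self hM₁0 hM₁top
  have hdiv₂ : c / M₂ ≤ 1 := by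
    calc c / M₂ ≤ M₂ / M₂ := ENNReal.div_le_div_right (min_le_right _ _) _
    _ = 1 := ENNReal.div_self hM₂0 hM₂top
  -- marginal pieces
  set f₁ : Measure I := (μ.restrict R₁).map Prod.fst with hf₁def
  set f₂ : Measure I := (μ.restrict R₂).map Prod.fst with hf₂def
  set s₁ : Measure I := (μ.restrict R₁).map Prod.snd with hs₁def
  set s₂ : Measure I := (μ.restrict R₂).map Prod.snd with hs₂def
  set α₁ : Measure I := (c / M₁) • f₁ with hα₁def
  set α₂ : Measure I := (c / M₂) • f₂ with hα₂def
  set β₁ : Measure I := (c / M₁) • s₁ with hβ₁def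
  set β₂ : Measure I := (c / M₂) • s₂ with hβ₂def
  set σ₁ : Measure (I × I) := α₁.prod β₂ with hσ₁def
  set σ₂ : Measure (I × I) := α₂.prod β₁ with hσ₂def
  have hf₁univ : f₁ Set.univ = M₁ := by
    rw [hf₁def, Measure.map_apply measurable_fst MeasurableSet.univ]
    simp [hM₁def]
  have hf₂univ : f₂ Set.univ = M₂ := by
    rw [hf₂def, Measure.map_apply measurable_fst MeasurableSet.univ]
    simp [hM₂def]
  have hs₁univ : s₁ Set.univ = M₁ := by
    rw [hs₁def, Measure.map_apply measurable_snd MeasurableSet.univ]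
    simp [hM₁def]
  have hs₂univ : s₂ Set.univ = M₂ := by
    rw [hs₂def, Measure.map_apply measurable_snd MeasurableSet.univ]
    simp [hM₂def]
  have hα₁univ : α₁ Set.univ = c := by
    rw [hα₁def, Measure.smul_apply, hf₁univ, smul_eq_mul, ENNReal.div_mul_cancel hM₁0 hM₁top]
  have hα₂univ : α₂ Set.univ = c := by
    rw [hα₂def, Measure.smul_apply, hf₂univ, smul_eq_mul, ENNReal.div_mul_cancel hM₂0 hM₂top]
  have hβ₁univ : β₁ Set.univ = c := by
    rw [hβ₁def, Measure.smul_apply, hs₁univ, smul_eq_mul, ENNReal.div_mul_cancel hM₁0 hM₁top]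
  have hβ₂univ : β₂ Set.univ = c := by
    rw [hβ₂def, Measure.smul_apply, hs₂univ, smul_eq_mul, ENNReal.div_mul_cancel hM₂0 hM₂top]
  haveI : IsFiniteMeasure f₁ := ⟨by rw [hf₁univ]; exact hM₁top.lt_top⟩
  haveI : IsFiniteMeasure f₂ := ⟨by rw [hf₂univ]; exact hM₂top.lt_top⟩
  haveI : IsFiniteMeasure s₁ := ⟨by rw [hs₁univ]; exact hM₁top.lt_top⟩
  haveI : IsFiniteMeasure s₂ := ⟨by rw [hs₂univ]; exact hM₂top.lt_top⟩
  haveI : IsFiniteMeasure α₁ := ⟨by rw [hα₁univ]; exact hctop.lt_top⟩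
  haveI : IsFiniteMeasure α₂ := ⟨by rw [hα₂univ]; exact hctop.lt_top⟩
  haveI : IsFiniteMeasure β₁ := ⟨by rw [hβ₁univ]; exact hctop.lt_top⟩
  haveI : IsFiniteMeasure β₂ := ⟨by rw [hβ₂univ]; exact hctop.lt_top⟩
  have hσ₁univ : σ₁ Set.univ = c * c := by
    rw [hσ₁def, ← Set.univ_prod_univ, Measure.prod_prod, hα₁univ, hβ₂univ]
  have hσ₂univ : σ₂ Set.univ = c * c := by
    rw [hσ₂def, ← Set.univ_prod_univ, Measure.prod_prod, hα₂univ, hβ₁univ]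
  haveI : IsFiniteMeasure σ₁ :=
    ⟨by rw [hσ₁univ]; exact ENNReal.mul_lt_top hctop.lt_top hctop.lt_top⟩
  haveI : IsFiniteMeasure σ₂ :=
    ⟨by rw [hσ₂univ]; exact ENNReal.mul_lt_top hctop.lt_top hctop.lt_top⟩
  -- the modified measure
  set ν' : Measure (I × I) := μ.restrict (R₁ ∪ R₂)ᶜ + ((1 - c / M₁) • μ.restrict R₁ +
      ((1 - c / M₂) • μ.restrict R₂ + (c⁻¹ • σ₁ + c⁻¹ • σ₂))) with hν'def
  have hdecomp : μ = μ.restrict (R₁ ∪ R₂)ᶜ + (μ.restrict R₁ + μ.restrict R₂) := by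
    rw [← Measure.restrict_union hdisj hR₂m, add_comm, Measure.restrict_add_restrict_compl
      (hR₁m.union hR₂m)]
  have combine₁ : ∀ T : Measure I, (1 - c / M₁) • T + (c / M₁) • T = T := by
    intro T; rw [← add_smul, tsub_add_cancel_of_le hdiv₁, one_smul]
  have combine₂ : ∀ T : Measure I, (1 - c / M₂) • T + (c / M₂) • T = T := by
    intro T; rw [← add_smul, tsub_add_cancel_of_le hdiv₂, one_smul]
  have hcc : ∀ T : Measure I, c⁻¹ • (c • T) = T := by
    intro T; rw [smul_smul, ENNReal.inv_mul_cancel hc0 hctop, one_smul]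
  have hfst : ν'.map Prod.fst = μ.map Prod.fst := by
    rw [hν'def]
    rw [Measure.map_add _ _ measurable_fst, Measure.map_add _ _ measurable_fst,
        Measure.map_add _ _ measurable_fst, Measure.map_add _ _ measurable_fst,
        Measure.map_smul, Measure.map_smul, Measure.map_smul, Measure.map_smul,
        hσ₁def, hσ₂def, Measure.map_fst_prod, Measure.map_fst_prod, hβ₂univ, hβ₁univ,
        hcc α₁, hcc α₂, hα₁def, hα₂def]
    conv_rhs => rw [hdecomp, Measure.map_add _ _ measurable_fst,
      Measure.map_add _ _ measurable_fst, ← combine₁ ((μ.restrict R₁).map Prod.fst),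
      ← combine₂ ((μ.restrict R₂).map Prod.fst)]
    rw [hf₁def, hf₂def]
    abel
  have hsnd : ν'.map Prod.snd = μ.map Prod.snd := by
    rw [hν'def]
    rw [Measure.map_add _ _ measurable_snd, Measure.map_add _ _ measurable_snd,
        Measure.map_add _ _ measurable_snd, Measure.map_add _ _ measurable_snd,
        Measure.map_smul, Measure.map_smul, Measure.map_smul, Measure.map_smul,
        hσ₁def, hσ₂def, Measure.map_snd_prod, Measure.map_snd_prod, hα₁univ, hα₂univ,
        hcc β₂, hcc β₁, hβ₁def, hβ₂def]
    conv_rhs => rw [hdecomp, Measure.map_add _ _ measurable_snd,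
      Measure.map_add _ _ measurable_snd, ← combine₁ ((μ.restrict R₁).map Prod.snd),
      ← combine₂ ((μ.restrict R₂).map Prod.snd)]
    rw [hs₁def, hs₂def]
    abel
  -- ν' is a probability measure
  haveI hν'P : IsProbabilityMeasure ν' := by
    constructor
    have h1 : ν'.map Prod.fst Set.univ = ν' Set.univ := by
      rw [Measure.map_apply measurable_fst MeasurableSet.univ, Set.preimage_univ]
    have h2 : μ.map Prod.fst Set.univ = 1 := by
      rw [Measure.map_apply measurable_fst MeasurableSet.univ, Set.preimage_univ, measure_univ]
    rw [← h1, hfst, h2]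
  -- holonomy of ν'
  have key : ∀ (T : Measure (I × I)) [IsFiniteMeasure T], ∀ f : C(I, ℝ),
      ∫ p, (f p.1 - f p.2) ∂T = (∫ x, f x ∂(T.map Prod.fst)) - ∫ x, f x ∂(T.map Prod.snd) := by
    intro T hT f
    rw [integral_map measurable_fst.aemeasurable f.continuous.aestronglyMeasurable,
        integral_map measurable_snd.aemeasurable f.continuous.aestronglyMeasurable]
    exact integral_sub (contInt (f.continuous.comp continuous_fst) T)
      (contInt (f.continuous.comp continuous_snd) T)
  have hhol : ∀ f : C(I, ℝ), ∫ p, (f p.1 - f p.2) ∂ν' = 0 := by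
    intro f
    rw [key ν' f, hfst, hsnd, ← key μ f]
    exact hν f
  have hle : ∫ p, A (p.1 : ℝ) (p.2 : ℝ) ∂ν' ≤ m := hmax ⟨ν', hν'P⟩ hhol
  -- integrability and finiteness of the pieces
  have hGc : Continuous (Abar A) := AbarCont A hA
  haveI fin1 : IsFiniteMeasure ((1 - c / M₁) • μ.restrict R₁) := ⟨by
    rw [Measure.smul_apply, Measure.restrict_apply_univ, smul_eq_mul]
    exact ENNReal.mul_lt_top (tsub_le_self.trans_lt ENNReal.one_lt_top) hM₁top.lt_top⟩
  haveI fin2 : IsFiniteMeasure ((1 - c / M₂) • μ.restrict R₂) := ⟨by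
    rw [Measure.smul_apply, Measure.restrict_apply_univ, smul_eq_mul]
    exact ENNReal.mul_lt_top (tsub_le_self.trans_lt ENNReal.one_lt_top) hM₂top.lt_top⟩
  have hcinvtop : c⁻¹ < ∞ := ENNReal.inv_lt_top.2 (pos_iff_ne_zero.2 hc0)
  haveI fin3 : IsFiniteMeasure (c⁻¹ • σ₁) := ⟨by
    rw [Measure.smul_apply, smul_eq_mul]
    exact ENNReal.mul_lt_top hcinvtop (measure_lt_top σ₁ _)⟩
  haveI fin4 : IsFiniteMeasure (c⁻¹ • σ₂) := ⟨by
    rw [Measure.smul_apply, smul_eq_mul]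
    exact ENNReal.mul_lt_top hcinvtop (measure_lt_top σ₂ _)⟩
  haveI fin5 : IsFiniteMeasure ((c / M₁) • μ.restrict R₁) := ⟨by
    rw [Measure.smul_apply, Measure.restrict_apply_univ, smul_eq_mul]
    exact ENNReal.mul_lt_top (hdiv₁.trans_lt ENNReal.one_lt_top) hM₁top.lt_top⟩
  haveI fin6 : IsFiniteMeasure ((c / M₂) • μ.restrict R₂) := ⟨by
    rw [Measure.smul_apply, Measure.restrict_apply_univ, smul_eq_mul]
    exact ENNReal.mul_lt_top (hdiv₂.trans_lt ENNReal.one_lt_top) hM₂top.lt_top⟩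
  -- names for the integrals
  set E : ℝ := ∫ r, Abar A r ∂(μ.restrict (R₁ ∪ R₂)ᶜ) with hEdef
  set I1 : ℝ := ∫ r, Abar A r ∂(μ.restrict R₁) with hI1def
  set I2 : ℝ := ∫ r, Abar A r ∂(μ.restrict R₂) with hI2def
  set J1 : ℝ := ∫ r, Abar A r ∂σ₁ with hJ1def
  set J2 : ℝ := ∫ r, Abar A r ∂σ₂ with hJ2def
  set cr : ℝ := c.toReal with hcrdef
  have hcr : 0 < cr := ENNReal.toReal_pos hc0 hctop
  set d₁ : ℝ := (c / M₁).toReal with hd₁def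
  set d₂ : ℝ := (c / M₂).toReal with hd₂def
  have ha₁ : (1 - c / M₁).toReal = 1 - d₁ := by
    rw [ENNReal.toReal_sub_of_le hdiv₁ ENNReal.one_ne_top, ENNReal.toReal_one, hd₁def]
  have ha₂ : (1 - c / M₂).toReal = 1 - d₂ := by
    rw [ENNReal.toReal_sub_of_le hdiv₂ ENNReal.one_ne_top, ENNReal.toReal_one, hd₂def]
  have hcinv : (c⁻¹).toReal = cr⁻¹ := by rw [ENNReal.toReal_inv, hcrdef]
  -- decomposition of ∫ A dμ
  have hIμ : ∫ p, A (p.1 : ℝ) (p.2 : ℝ) ∂μ = E + (I1 + I2) := by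
    show ∫ r, Abar A r ∂μ = E + (I1 + I2)
    conv_lhs => rw [hdecomp]
    rw [integral_add_measure (contInt hGc _) ((contInt hGc _).add_measure (contInt hGc _)),
        integral_add_measure (contInt hGc _) (contInt hGc _)]
  -- decomposition of ∫ A dν'
  have hIν' : ∫ p, A (p.1 : ℝ) (p.2 : ℝ) ∂ν' =
      E + ((1 - d₁) * I1 + ((1 - d₂) * I2 + (cr⁻¹ * J1 + cr⁻¹ * J2))) := by
    show ∫ r, Abar A r ∂ν' = _
    rw [hν'def]
    rw [integral_add_measure (contInt hGc _) ((contInt hGc _).add_measure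
          ((contInt hGc _).add_measure ((contInt hGc _).add_measure (contInt hGc _)))),
        integral_add_measure (contInt hGc _) ((contInt hGc _).add_measure
          ((contInt hGc _).add_measure (contInt hGc _))),
        integral_add_measure (contInt hGc _) ((contInt hGc _).add_measure (contInt hGc _)),
        integral_add_measure (contInt hGc _) (contInt hGc _),
        integral_smul_measure, integral_smul_measure, integral_smul_measure,
        integral_smul_measure, ha₁, ha₂, hcinv]
    simp only [smul_eq_mul, hEdef, hI1def, hI2def, hJ1def, hJ2def]
  -- lower bounds for J1, J2
  have hprodsupp : ∀ (γ : Measure I) (θ : Measure I) [IsFiniteMeasure γ] [IsFiniteMeasure θ],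
      ∀ (W Z : Set I), IsOpen W → IsOpen Z →
      γ Wᶜ = 0 → θ Zᶜ = 0 → ∀ᵐ r ∂(γ.prod θ), r ∈ W ×ˢ Z := by
    intro γ θ _ _ W Z hWo hZo hW hZ
    rw [MeasureTheory.ae_iff]
    have hsub : {r : I × I | ¬ r ∈ W ×ˢ Z} ⊆ (Wᶜ ×ˢ (Set.univ : Set I)) ∪
        ((Set.univ : Set I) ×ˢ Zᶜ) := by
      intro r hr
      rw [Set.mem_setOf_eq, Set.mem_prod] at hr
      push_neg at hr
      by_cases h : r.1 ∈ W
      · exact Or.inr ⟨trivial, hr h⟩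
      · exact Or.inl ⟨h, trivial⟩
    refine measure_mono_null hsub ?_
    refine le_antisymm ((measure_union_le _ _).trans ?_) (zero_le)
    rw [Measure.prod_prod, Measure.prod_prod, hW, hZ]
    simp
  have hα₁U : α₁ U₁ᶜ = 0 := by
    rw [hα₁def, Measure.smul_apply, hf₁def,
        Measure.map_apply measurable_fst hU₁o.measurableSet.compl,
        Measure.restrict_apply (measurable_fst hU₁o.measurableSet.compl)]
    have he : Prod.fst ⁻¹' U₁ᶜ ∩ R₁ = ∅ := by
      ext r
      simp only [Set.mem_inter_iff, Set.mem_preimage, Set.mem_compl_iff, hR₁def,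
        Set.mem_prod, Set.mem_empty_iff_false, iff_false, not_and]
      tauto
    rw [he, measure_empty, smul_eq_mul, mul_zero]
  have hα₂U : α₂ U₂ᶜ = 0 := by
    rw [hα₂def, Measure.smul_apply, hf₂def,
        Measure.map_apply measurable_fst hU₂o.measurableSet.compl,
        Measure.restrict_apply (measurable_fst hU₂o.measurableSet.compl)]
    have he : Prod.fst ⁻¹' U₂ᶜ ∩ R₂ = ∅ := by
      ext r
      simp only [Set.mem_inter_iff, Set.mem_preimage, Set.mem_compl_iff, hR₂def,
        Set.mem_prod, Set.mem_empty_iff_false, iff_false, not_and]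
      tauto
    rw [he, measure_empty, smul_eq_mul, mul_zero]
  have hβ₁V : β₁ V₁ᶜ = 0 := by
    rw [hβ₁def, Measure.smul_apply, hs₁def,
        Measure.map_apply measurable_snd hV₁o.measurableSet.compl,
        Measure.restrict_apply (measurable_snd hV₁o.measurableSet.compl)]
    have he : Prod.snd ⁻¹' V₁ᶜ ∩ R₁ = ∅ := by
      ext r
      simp only [Set.mem_inter_iff, Set.mem_preimage, Set.mem_compl_iff, hR₁def,
        Set.mem_prod, Set.mem_empty_iff_false, iff_false, not_and]
      tauto
    rw [he, measure_empty, smul_eq_mul, mul_zero]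
  have hβ₂V : β₂ V₂ᶜ = 0 := by
    rw [hβ₂def, Measure.smul_apply, hs₂def,
        Measure.map_apply measurable_snd hV₂o.measurableSet.compl,
        Measure.restrict_apply (measurable_snd hV₂o.measurableSet.compl)]
    have he : Prod.snd ⁻¹' V₂ᶜ ∩ R₂ = ∅ := by
      ext r
      simp only [Set.mem_inter_iff, Set.mem_preimage, Set.mem_compl_iff, hR₂def,
        Set.mem_prod, Set.mem_empty_iff_false, iff_false, not_and]
      tauto
    rw [he, measure_empty, smul_eq_mul, mul_zero]
  have hJ₁ : (A x₁ y₂ - η) * (cr * cr) ≤ J1 := by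
    have hae := hprodsupp α₁ β₂ U₁ V₂ hU₁o hV₂o hα₁U hβ₂V
    have hmono := integral_mono_ae (integrable_const (A (x₁:ℝ) (y₂:ℝ) - η))
      (contInt hGc σ₁) (hae.mono (fun r hr => by
        have h3 := hb₃ r.1 r.2 (lt_of_lt_of_le (memU₁.1 hr.1) hρρ₃)
          (lt_of_lt_of_le (memV₂.1 hr.2) hρρ₃)
        have := abs_lt.1 h3
        simp only [Abar]
        linarith))
    rw [integral_const, measureReal_def, hσ₁univ, smul_eq_mul, ENNReal.toReal_mul, ← hcrdef] at hmono
    calc (A (x₁:ℝ) (y₂:ℝ) - η) * (cr * cr) = cr * cr * (A (x₁:ℝ) (y₂:ℝ) - η) := by ring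
    _ ≤ J1 := hmono
  have hJ₂ : (A x₂ y₁ - η) * (cr * cr) ≤ J2 := by
    have hae := hprodsupp α₂ β₁ U₂ V₁ hU₂o hV₁o hα₂U hβ₁V
    have hmono := integral_mono_ae (integrable_const (A (x₂:ℝ) (y₁:ℝ) - η))
      (contInt hGc σ₂) (hae.mono (fun r hr => by
        have h4 := hb₄ r.1 r.2 (lt_of_lt_of_le (memU₂.1 hr.1) hρρ₄)
          (lt_of_lt_of_le (memV₁.1 hr.2) hρρ₄)
        have := abs_lt.1 h4
        simp only [Abar]
        linarith))
    rw [integral_const, measureReal_def, hσ₂univ, smul_eq_mul, ENNReal.toReal_mul, ← hcrdef] at hmono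
    calc (A (x₂:ℝ) (y₁:ℝ) - η) * (cr * cr) = cr * cr * (A (x₂:ℝ) (y₁:ℝ) - η) := by ring
    _ ≤ J2 := hmono
  -- upper bounds for d₁ I1, d₂ I2
  have hsm₁univ : ((c / M₁) • μ.restrict R₁) Set.univ = c := by
    rw [Measure.smul_apply, Measure.restrict_apply_univ, smul_eq_mul,
      ENNReal.div_mul_cancel hM₁0 hM₁top]
  have hsm₂univ : ((c / M₂) • μ.restrict R₂) Set.univ = c := by
    rw [Measure.smul_apply, Measure.restrict_apply_univ, smul_eq_mul,
      ENNReal.div_mul_cancel hM₂0 hM₂top]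
  have haeR : ∀ (k : ℝ≥0∞) (R : Set (I × I)), MeasurableSet R →
      ∀ᵐ r ∂(k • μ.restrict R), r ∈ R := by
    intro k R hR
    rw [MeasureTheory.ae_iff]
    have : (k • μ.restrict R) {r | ¬ r ∈ R} = 0 := by
      have hcompl : {r : I × I | ¬ r ∈ R} = Rᶜ := rfl
      rw [hcompl, Measure.smul_apply, Measure.restrict_apply hR.compl,
        Set.compl_inter_self, measure_empty, smul_eq_mul, mul_zero]
    exact this
  have hK₁ : d₁ * I1 ≤ (A x₁ y₁ + η) * cr := by
    have heq : d₁ * I1 = ∫ r, Abar A r ∂((c / M₁) • μ.restrict R₁) := by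
      rw [integral_smul_measure, smul_eq_mul, hd₁def, hI1def]
    have hmono := integral_mono_ae (contInt hGc ((c / M₁) • μ.restrict R₁))
      (integrable_const (A (x₁:ℝ) (y₁:ℝ) + η)) ((haeR (c / M₁) R₁ hR₁m).mono (fun r hr => by
        have h1' := hb₁ r.1 r.2 (lt_of_lt_of_le (memU₁.1 hr.1) hρρ₁)
          (lt_of_lt_of_le (memV₁.1 hr.2) hρρ₁)
        have := abs_lt.1 h1'
        simp only [Abar]
        linarith))
    rw [integral_const, measureReal_def, hsm₁univ, smul_eq_mul, ← hcrdef] at hmono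
    rw [heq]
    calc ∫ r, Abar A r ∂((c / M₁) • μ.restrict R₁) ≤ cr * (A (x₁:ℝ) (y₁:ℝ) + η) := hmono
    _ = (A (x₁:ℝ) (y₁:ℝ) + η) * cr := by ring
  have hK₂ : d₂ * I2 ≤ (A x₂ y₂ + η) * cr := by
    have heq : d₂ * I2 = ∫ r, Abar A r ∂((c / M₂) • μ.restrict R₂) := by
      rw [integral_smul_measure, smul_eq_mul, hd₂def, hI2def]
    have hmono := integral_mono_ae (contInt hGc ((c / M₂) • μ.restrict R₂))
      (integrable_const (A (x₂:ℝ) (y₂:ℝ) + η)) ((haeR (c / M₂) R₂ hR₂m).mono (fun r hr => by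
        have h2' := hb₂ r.1 r.2 (lt_of_lt_of_le (memU₂.1 hr.1) hρρ₂)
          (lt_of_lt_of_le (memV₂.1 hr.2) hρρ₂)
        have := abs_lt.1 h2'
        simp only [Abar]
        linarith))
    rw [integral_const, measureReal_def, hsm₂univ, smul_eq_mul, ← hcrdef] at hmono
    rw [heq]
    calc ∫ r, Abar A r ∂((c / M₂) • μ.restrict R₂) ≤ cr * (A (x₂:ℝ) (y₂:ℝ) + η) := hmono
    _ = (A (x₂:ℝ) (y₂:ℝ) + η) * cr := by ring
  -- final arithmetic
  rw [hIν'] at hle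
  rw [hIμ] at hm
  have s2 : (A (x₁:ℝ) (y₂:ℝ) - η) * cr ≤ cr⁻¹ * J1 := by
    have h := mul_le_mul_of_nonneg_left hJ₁ (inv_nonneg.2 hcr.le)
    have he : cr⁻¹ * ((A (x₁:ℝ) (y₂:ℝ) - η) * (cr * cr)) = (A (x₁:ℝ) (y₂:ℝ) - η) * cr := by
      field_simp
    rwa [he] at h
  have s3 : (A (x₂:ℝ) (y₁:ℝ) - η) * cr ≤ cr⁻¹ * J2 := by
    have h := mul_le_mul_of_nonneg_left hJ₂ (inv_nonneg.2 hcr.le)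
    have he : cr⁻¹ * ((A (x₂:ℝ) (y₁:ℝ) - η) * (cr * cr)) = (A (x₂:ℝ) (y₁:ℝ) - η) * cr := by
      field_simp
    rwa [he] at h
  have hfinal : (A (x₁:ℝ) (y₂:ℝ) + A (x₂:ℝ) (y₁:ℝ) - 2 * η) * cr ≤
      (A (x₁:ℝ) (y₁:ℝ) + A (x₂:ℝ) (y₂:ℝ) + 2 * η) * cr := by nlinarith [s2, s3, hK₁, hK₂, hle, hm]
  have hcontra : (A (x₁:ℝ) (y₁:ℝ) + A (x₂:ℝ) (y₂:ℝ) + 2 * η) * cr <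
      (A (x₁:ℝ) (y₂:ℝ) + A (x₂:ℝ) (y₁:ℝ) - 2 * η) * cr := by
    apply mul_lt_mul_of_pos_right _ hcr
    rw [hηdef]
    rw [hδdef] at hδ ⊢
    linarith
  linarith

/-- if A is C² with ∂²A/∂x∂y > 0 and ν ∈ M is a maximizing measure,
then supp ν is a graph: for each x there is at most one y with (x,y) ∈ supp ν. -/
theorem stmt14 (A : ℝ → ℝ → ℝ) (hA : ContDiff ℝ 2 (Function.uncurry A))
    (htwist : ∀ x ∈ Set.Icc (0:ℝ) 1, ∀ y ∈ Set.Icc (0:ℝ) 1,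
      0 < deriv (fun y' => deriv (fun x' => A x' y') x) y)
    (m : ℝ) (ν : ProbabilityMeasure (I × I))
    (hν : ∀ f : C(I, ℝ), ∫ p, (f p.1 - f p.2) ∂(ν : Measure (I × I)) = 0)
    (hmax : ∀ ν' : ProbabilityMeasure (I × I),
      (∀ f : C(I, ℝ), ∫ p, (f p.1 - f p.2) ∂(ν' : Measure (I × I)) = 0) →
      ∫ p, A p.1 p.2 ∂(ν' : Measure (I × I)) ≤ m)
    (hm : ∫ p, A p.1 p.2 ∂(ν : Measure (I × I)) = m) :
    ∀ x y y' : I, (x, y) ∈ measSupp (ν : Measure (I × I)) →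
      (x, y') ∈ measSupp (ν : Measure (I × I)) → y = y' := by
  have hmono := monoSupp A hA htwist m ν hν hmax hm
  set μ : Measure (I × I) := (ν : Measure (I × I)) with hμdef
  haveI : IsProbabilityMeasure μ := by rw [hμdef]; infer_instance
  have hmarg : μ.map Prod.fst = μ.map Prod.snd := marginalsEq μ hν
  -- balance across a vertical cut
  have hbal : ∀ t : ℝ, μ ({w : I | (w:ℝ) < t} ×ˢ {w : I | (w:ℝ) < t}ᶜ)
      = μ ({w : I | (w:ℝ) < t}ᶜ ×ˢ {w : I | (w:ℝ) < t}) := by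
    intro t
    set S := {w : I | (w:ℝ) < t} with hSdef
    have hSo : IsOpen S := isOpen_Iio.preimage continuous_subtype_val
    have hSm : MeasurableSet S := hSo.measurableSet
    have h1 : μ (Prod.fst ⁻¹' S) = μ (Prod.snd ⁻¹' S) := by
      rw [← Measure.map_apply measurable_fst hSm, ← Measure.map_apply measurable_snd hSm, hmarg]
    have e1 : Prod.fst ⁻¹' S = (S ×ˢ S) ∪ (S ×ˢ Sᶜ) := by
      ext r; by_cases h : r.2 ∈ S <;> simp [Set.mem_prod, h]
    have e2 : Prod.snd ⁻¹' S = (S ×ˢ S) ∪ (Sᶜ ×ˢ S) := by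
      ext r; by_cases h : r.1 ∈ S <;> simp [Set.mem_prod, h]
    have d1 : Disjoint (S ×ˢ S) (S ×ˢ Sᶜ) := by
      rw [Set.disjoint_left]; rintro r ⟨-, h2⟩ ⟨-, h3⟩; exact h3 h2
    have d2 : Disjoint (S ×ˢ S) (Sᶜ ×ˢ S) := by
      rw [Set.disjoint_left]; rintro r ⟨h2, -⟩ ⟨h3, -⟩; exact h3 h2
    rw [e1, e2, measure_union d1 (hSm.prod hSm.compl),
        measure_union d2 (hSm.compl.prod hSm)] at h1
    exact (ENNReal.add_right_inj (measure_ne_top μ _)).1 h1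
  -- no two points of the support lie on the same vertical, in increasing order
  have keyC : ∀ x y y' : I, (x, y) ∈ measSupp μ → (x, y') ∈ measSupp μ →
      (y : ℝ) < (y' : ℝ) → False := by
    intro x y y' hy hy' hlt
    by_cases hcase : (x : ℝ) < (y' : ℝ)
    · -- cut between max(x,y) and y'
      set a : ℝ := max (x : ℝ) (y : ℝ) with hadef
      have ha : a < y' := max_lt hcase hlt
      set t₁ : ℝ := a + (y' - a)/3 with ht₁def
      set t₂ : ℝ := a + 2*(y' - a)/3 with ht₂def
      set t : ℝ := a + (y' - a)/2 with htdef
      have hax : (x:ℝ) ≤ a := le_max_left _ _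
      clear_value t t₂ t₁ a
      have hG : μ {r : I × I | t₁ < (r.1 : ℝ) ∧ (r.2 : ℝ) < t₂} = 0 := by
        apply suppNull
        · exact (isOpen_lt continuous_const (continuous_subtype_val.comp continuous_fst)).inter
            (isOpen_lt (continuous_subtype_val.comp continuous_snd) continuous_const)
        · rintro r ⟨hr1, hr2⟩ hrsupp
          exact hmono (x, y') r hy' hrsupp (by simp only; linarith) (by simp only; linarith)
      set S := {w : I | (w:ℝ) < t} with hSdef
      have h0 : μ (Sᶜ ×ˢ S) = 0 := by
        refine measure_mono_null ?_ hG
        rintro r ⟨hr1, hr2⟩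
        have hr1' : ¬ ((r.1 : ℝ) < t) := hr1
        have hr2' : (r.2 : ℝ) < t := hr2
        have hr1'' := le_of_not_gt hr1'
        exact ⟨by linarith, by linarith⟩
      have hb := hbal t
      rw [← hSdef] at hb
      have h0' : μ (S ×ˢ Sᶜ) = 0 := by rw [hb]; exact h0
      have hW : (0:ℝ≥0∞) < μ {r : I × I | (r.1 : ℝ) < t ∧ t < (r.2 : ℝ)} := by
        apply hy'
        · exact (isOpen_lt (continuous_subtype_val.comp continuous_fst) continuous_const).inter
            (isOpen_lt continuous_const (continuous_subtype_val.comp continuous_snd))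
        · exact ⟨show (x:ℝ) < t by linarith, show t < (y':ℝ) by linarith⟩
      have hsub : {r : I × I | (r.1 : ℝ) < t ∧ t < (r.2 : ℝ)} ⊆ S ×ˢ Sᶜ := by
        rintro r ⟨hr1, hr2⟩
        exact ⟨hr1, fun hmem => lt_asymm hr2 hmem⟩
      exact absurd (measure_mono_null hsub h0') hW.ne'
    · -- y' ≤ x ; cut between y and y'
      push_neg at hcase
      set t₁ : ℝ := (y:ℝ) + (y' - y)/3 with ht₁def
      set t₂ : ℝ := (y:ℝ) + 2*(y' - y)/3 with ht₂def
      set t : ℝ := (y:ℝ) + (y' - y)/2 with htdef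
      clear_value t t₂ t₁
      have hG : μ {r : I × I | (r.1 : ℝ) < t₂ ∧ t₁ < (r.2 : ℝ)} = 0 := by
        apply suppNull
        · exact (isOpen_lt (continuous_subtype_val.comp continuous_fst) continuous_const).inter
            (isOpen_lt continuous_const (continuous_subtype_val.comp continuous_snd))
        · rintro r ⟨hr1, hr2⟩ hrsupp
          exact hmono r (x, y) hrsupp hy (by simp only; linarith) (by simp only; linarith)
      set S := {w : I | (w:ℝ) < t} with hSdef
      have h0 : μ (S ×ˢ Sᶜ) = 0 := by
        refine measure_mono_null ?_ hG
        rintro r ⟨hr1, hr2⟩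
        have hr1' : (r.1 : ℝ) < t := hr1
        have hr2' : ¬ ((r.2 : ℝ) < t) := hr2
        have hr2'' := le_of_not_gt hr2'
        exact ⟨by linarith, by linarith⟩
      have hb := hbal t
      rw [← hSdef] at hb
      have h0' : μ (Sᶜ ×ˢ S) = 0 := by rw [← hb]; exact h0
      have hW : (0:ℝ≥0∞) < μ {r : I × I | t < (r.1 : ℝ) ∧ (r.2 : ℝ) < t} := by
        apply hy
        · exact (isOpen_lt continuous_const (continuous_subtype_val.comp continuous_fst)).inter
            (isOpen_lt (continuous_subtype_val.comp continuous_snd) continuous_const)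
        · exact ⟨show t < (x:ℝ) by linarith, show (y:ℝ) < t by linarith⟩
      have hsub : {r : I × I | t < (r.1 : ℝ) ∧ (r.2 : ℝ) < t} ⊆ Sᶜ ×ˢ S := by
        rintro r ⟨hr1, hr2⟩
        exact ⟨fun hmem => lt_asymm hr1 hmem, hr2⟩
      exact absurd (measure_mono_null hsub h0') hW.ne'
  intro x y y' hy hy'
  rcases lt_trichotomy (y : ℝ) (y' : ℝ) with h | h | h
  · exact absurd (keyC x y y' hy hy' h) not_false
  · exact Subtype.ext h
  · exact absurd (keyC x y' y hy' hy h) not_false
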